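/- Let k be a positive integer and define b_k(n) as the number of k-tuples (n_1,…,n_k) of positive integers with lcm(n_1,…,n_k) = n and gcd(n_1,…,n_k) = 1. Then for every positive integer n, ∑_{d∣n} b_k(d) = ∑_{δt=n} μ(δ)·τ(t)^k. -/

import Mathlib

open Finset ArithmeticFunction

private lemma sum_mu_divisors (m : ℕ) :
    ∑ d ∈ m.divisors, (ArithmeticFunction.moebius d : ℤ) = if m = 1 then 1 else 0 := by
  have h := ArithmeticFunction.coe_mul_zeta_apply
    (f := (ArithmeticFunction.moebius : ArithmeticFunction ℤ)) (x := m)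
  rw [ArithmeticFunction.moebius_mul_coe_zeta, ArithmeticFunction.one_apply] at h
  exact h.symm

private lemma card_filter_dvd_divisors {n δ : ℕ} (hn : n ≠ 0) (hδ : δ ∣ n) :
    (n.divisors.filter (fun e => δ ∣ e)).card = (n / δ).divisors.card := by
  have hδ0 : δ ≠ 0 := by
    rintro rfl
    exact hn (Nat.eq_zero_of_zero_dvd hδ)
  symm
  refine Finset.card_bij' (fun e _ => δ * e) (fun e _ => e / δ) ?_ ?_ ?_ ?_
  · intro e he
    rw [Nat.mem_divisors] at he
    rw [Finset.mem_filter, Nat.mem_divisors]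
    exact ⟨⟨(Nat.dvd_div_iff_mul_dvd hδ).mp he.1, hn⟩, Dvd.intro e rfl⟩
  · intro e he
    rw [Finset.mem_filter, Nat.mem_divisors] at he
    rw [Nat.mem_divisors]
    refine ⟨(Nat.dvd_div_iff_mul_dvd hδ).mpr ?_, ?_⟩
    · rw [Nat.mul_div_cancel' he.2]
      exact he.1.1
    · exact (Nat.div_pos (Nat.le_of_dvd (Nat.pos_of_ne_zero hn) hδ)
        (Nat.pos_of_ne_zero hδ0)).ne'
  · intro e _
    exact Nat.mul_div_cancel_left e (Nat.pos_of_ne_zero hδ0)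
  · intro e he
    rw [Finset.mem_filter] at he
    exact Nat.mul_div_cancel' he.2

theorem sum_divisors_card_unitary_lcm_tuples (k : ℕ) (hk : 0 < k) (n : ℕ) (hn : 0 < n) :
    ∑ d ∈ n.divisors,
        (Nat.card {t : Fin k → ℕ // (∀ i, 0 < t i) ∧ Finset.univ.lcm t = d ∧
          Finset.univ.gcd t = 1} : ℤ) =
      ∑ d ∈ n.divisors, ArithmeticFunction.moebius d * ((n / d).divisors.card : ℤ) ^ k := by
  classical
  have hn0 : n ≠ 0 := hn.ne'
  set T : Finset (Fin k → ℕ) := Fintype.piFinset (fun _ => n.divisors) with hT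
  have hTmem : ∀ t : Fin k → ℕ, t ∈ T ↔ ∀ i, t i ∣ n := by
    intro t
    simp [hT, Fintype.mem_piFinset, Nat.mem_divisors, hn0]
  -- Step 1: each Nat.card equals a Finset filter card
  have step1 : ∀ d ∈ n.divisors,
      (Nat.card {t : Fin k → ℕ // (∀ i, 0 < t i) ∧ Finset.univ.lcm t = d ∧
        Finset.univ.gcd t = 1} : ℤ)
      = ((T.filter (fun t => Finset.univ.lcm t = d ∧ Finset.univ.gcd t = 1)).card : ℤ) := by
    intro d hd
    have hdn : d ∣ n := (Nat.mem_divisors.mp hd).1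
    have hset : {t : Fin k → ℕ | (∀ i, 0 < t i) ∧ Finset.univ.lcm t = d ∧
        Finset.univ.gcd t = 1}
        = ↑(T.filter fun t => Finset.univ.lcm t = d ∧ Finset.univ.gcd t = 1) := by
      ext t
      simp only [Set.mem_setOf_eq, Finset.coe_filter, Set.mem_setOf_eq, hTmem]
      constructor
      · rintro ⟨hpos, hl, hg⟩
        exact ⟨fun i => (hl ▸ Finset.dvd_lcm (Finset.mem_univ i)).trans hdn, hl, hg⟩
      · rintro ⟨hmem, hl, hg⟩
        exact ⟨fun i => Nat.pos_of_dvd_of_pos (hmem i) hn, hl, hg⟩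
    have hcard : Nat.card {t : Fin k → ℕ // (∀ i, 0 < t i) ∧ Finset.univ.lcm t = d ∧
        Finset.univ.gcd t = 1}
        = (T.filter fun t => Finset.univ.lcm t = d ∧ Finset.univ.gcd t = 1).card := by
      rw [← Set.ncard_coe_finset, ← hset, ← Nat.card_coe_set_eq]
      rfl
    rw [hcard]
  rw [Finset.sum_congr rfl step1]
  -- Step 2: fiberwise sum
  have step2 : ∑ d ∈ n.divisors,
      ((T.filter fun t => Finset.univ.lcm t = d ∧ Finset.univ.gcd t = 1).card)
      = (T.filter fun t => Finset.univ.gcd t = 1).card := by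
    rw [Finset.card_eq_sum_card_fiberwise (f := fun t => Finset.univ.lcm t)
      (t := n.divisors) (fun t ht => by
        rw [Finset.mem_coe, Finset.mem_filter] at ht
        exact Finset.mem_coe.mpr <| Nat.mem_divisors.mpr
          ⟨Finset.lcm_dvd (fun i _ => (hTmem t).mp ht.1 i), hn0⟩)]
    refine Finset.sum_congr rfl fun d _ => ?_
    rw [Finset.filter_filter]
    congr 1
    exact Finset.filter_congr fun t _ => and_comm
  -- Step 3: Möbius inversion over the gcd
  have step3 : ((T.filter fun t => Finset.univ.gcd t = 1).card : ℤ)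
      = ∑ δ ∈ n.divisors, (ArithmeticFunction.moebius δ : ℤ) *
          ((T.filter fun t => ∀ i, δ ∣ t i).card : ℤ) := by
    have hgcd_dvd : ∀ t ∈ T, Finset.univ.gcd t ∣ n := fun t ht =>
      (Finset.gcd_dvd (Finset.mem_univ (⟨0, hk⟩ : Fin k))).trans ((hTmem t).mp ht ⟨0, hk⟩)
    calc ((T.filter fun t => Finset.univ.gcd t = 1).card : ℤ)
        = ∑ t ∈ T, if Finset.univ.gcd t = 1 then (1 : ℤ) else 0 := by
          rw [Finset.card_filter, Nat.cast_sum]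
          exact Finset.sum_congr rfl fun t _ => by split <;> simp
      _ = ∑ t ∈ T, ∑ δ ∈ (Finset.univ.gcd t).divisors,
            (ArithmeticFunction.moebius δ : ℤ) := by
          refine Finset.sum_congr rfl fun t _ => ?_
          rw [sum_mu_divisors]
      _ = ∑ t ∈ T, ∑ δ ∈ n.divisors,
            if δ ∣ Finset.univ.gcd t then (ArithmeticFunction.moebius δ : ℤ) else 0 := by
          refine Finset.sum_congr rfl fun t ht => ?_
          rw [← Finset.sum_filter, Nat.divisors_filter_dvd_of_dvd hn0 (hgcd_dvd t ht)]
      _ = ∑ δ ∈ n.divisors, ∑ t ∈ T,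
            if δ ∣ Finset.univ.gcd t then (ArithmeticFunction.moebius δ : ℤ) else 0 :=
          Finset.sum_comm
      _ = ∑ δ ∈ n.divisors, (ArithmeticFunction.moebius δ : ℤ) *
            ((T.filter fun t => ∀ i, δ ∣ t i).card : ℤ) := by
          refine Finset.sum_congr rfl fun δ _ => ?_
          rw [← Finset.sum_filter]
          have : T.filter (fun t => δ ∣ Finset.univ.gcd t)
              = T.filter (fun t => ∀ i, δ ∣ t i) := by
            refine Finset.filter_congr fun t _ => ?_
            rw [Finset.dvd_gcd_iff]
            exact ⟨fun h i => h i (Finset.mem_univ i), fun h i _ => h i⟩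
          rw [this, Finset.sum_const, nsmul_eq_mul, mul_comm]
  -- Step 4: count tuples divisible by δ
  have step4 : ∀ δ ∈ n.divisors,
      ((T.filter fun t => ∀ i, δ ∣ t i).card : ℤ) = (((n / δ).divisors.card : ℤ)) ^ k := by
    intro δ hδ
    have hδn : δ ∣ n := (Nat.mem_divisors.mp hδ).1
    have hfil : T.filter (fun t => ∀ i, δ ∣ t i)
        = Fintype.piFinset (fun _ : Fin k => n.divisors.filter (fun e => δ ∣ e)) := by
      ext t
      simp only [Finset.mem_filter, hT, Fintype.mem_piFinset, Finset.mem_filter]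
      exact ⟨fun ⟨h1, h2⟩ i => ⟨h1 i, h2 i⟩, fun h => ⟨fun i => (h i).1, fun i => (h i).2⟩⟩
    rw [hfil, Fintype.card_piFinset]
    rw [Finset.prod_const, card_filter_dvd_divisors hn0 hδn]
    push_cast
    simp
  -- Combine
  calc ∑ d ∈ n.divisors,
      (((T.filter fun t => Finset.univ.lcm t = d ∧ Finset.univ.gcd t = 1).card : ℕ) : ℤ)
      = (((T.filter fun t => Finset.univ.gcd t = 1).card : ℕ) : ℤ) := by
        rw [← Nat.cast_sum, step2]
    _ = ∑ δ ∈ n.divisors, (ArithmeticFunction.moebius δ : ℤ) *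
          ((T.filter fun t => ∀ i, δ ∣ t i).card : ℤ) := step3
    _ = ∑ d ∈ n.divisors, ArithmeticFunction.moebius d * ((n / d).divisors.card : ℤ) ^ k := by
        refine Finset.sum_congr rfl fun δ hδ => ?_
        rw [step4 δ hδ]
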